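/- Let N = 4, E = {(3,0)} and A = {(1,0), (2,0)}. Then the kernel of the extended linear map T_{E,A} is one-dimensional; explicitly, it equals the set of triples (δ̂, ê, e′) of the form δ̂ 0 = 0, δ̂ 1 = δ̂ 2 = δ̂ 3 = t, ê (3,0) = −t (ê zero elsewhere), e′ (1,0) = e′ (2,0) = t (e′ zero elsewhere), for t ∈ ℝ. -/

import Mathlib

abbrev Pair (N : ℕ) := {p : Fin N × Fin N // p.2 < p.1}

def Dmap {N : ℕ} (δ : Fin N → ℝ) : Pair N → ℝ := fun p => δ p.1.1 - δ p.1.2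

def ind {N : ℕ} (a : Pair N) : Pair N → ℝ := fun p => if p = a then 1 else 0

def IsSolution {N : ℕ} (hN : 0 < N) (E : Set (Pair N)) (b : Pair N → ℝ)
    (dh : Fin N → ℝ) (eh : Pair N → ℝ) : Prop :=
  dh ⟨0, hN⟩ = 0 ∧ (∀ p ∉ E, eh p = 0) ∧ ∀ p, Dmap dh p + eh p = b p

/-- The ambient linear map `(dh, eh, e') ↦ D dh + eh - e'`. -/
def Lfull (N : ℕ) : ((Fin N → ℝ) × (Pair N → ℝ) × (Pair N → ℝ)) →ₗ[ℝ] (Pair N → ℝ) where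
  toFun x := fun p => (x.1 p.1.1 - x.1 p.1.2) + x.2.1 p - x.2.2 p
  map_add' x y := by funext p; simp; ring
  map_smul' c x := by funext p; simp; ring

/-- The domain of the extended (re-vectorized) map: triples `(dh, eh, e')` with
`dh 0 = 0`, `eh` supported on `E`, `e'` supported on `A`. -/
noncomputable def Dom {N : ℕ} (hN : 0 < N) (E A : Set (Pair N)) :
    Submodule ℝ ((Fin N → ℝ) × (Pair N → ℝ) × (Pair N → ℝ)) where
  carrier := {x | x.1 ⟨0, hN⟩ = 0 ∧ (∀ p ∉ E, x.2.1 p = 0) ∧ (∀ p ∉ A, x.2.2 p = 0)}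
  add_mem' := by
    rintro a b ⟨ha0, ha1, ha2⟩ ⟨hb0, hb1, hb2⟩
    refine ⟨by simp [ha0, hb0], fun p hp => by simp [ha1 p hp, hb1 p hp],
      fun p hp => by simp [ha2 p hp, hb2 p hp]⟩
  zero_mem' := ⟨rfl, fun p _ => rfl, fun p _ => rfl⟩
  smul_mem' := by
    rintro c a ⟨ha0, ha1, ha2⟩
    refine ⟨by simp [ha0], fun p hp => by simp [ha1 p hp], fun p hp => by simp [ha2 p hp]⟩

/-- The extended (re-vectorized) linear map `T_{E,A} (dh, eh, e') = D dh + eh - e'`. -/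
noncomputable def Tmap {N : ℕ} (hN : 0 < N) (E A : Set (Pair N)) :
    Dom hN E A →ₗ[ℝ] (Pair N → ℝ) := (Lfull N).comp (Dom hN E A).subtype

/-- For `N = 4`, `E = {(3,0)}` and `A = {(1,0), (2,0)}`, the kernel of the extended
linear map `T_{E,A}` is one-dimensional; explicitly, it is the set of triples with
`dh 1 = dh 2 = dh 3 = t`, `eh (3,0) = -t`, `e' (1,0) = e' (2,0) = t` for `t : ℝ`. -/
-- aux
noncomputable def F16 (t : ℝ) : (Fin 4 → ℝ) × (Pair 4 → ℝ) × (Pair 4 → ℝ) :=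
  ((fun i => if i = 0 then 0 else t),
    (-t) • ind (⟨(3, 0), by decide⟩ : Pair 4),
    t • ind (⟨(1, 0), by decide⟩ : Pair 4) + t • ind (⟨(2, 0), by decide⟩ : Pair 4))

lemma F16_smul (t : ℝ) : t • F16 1 = F16 t := by
  unfold F16
  refine Prod.ext ?_ (Prod.ext ?_ ?_)
  · funext i; by_cases h : i = 0 <;> simp [h]
  · funext p; fin_cases p <;> simp [ind]
  · funext p; fin_cases p <;> simp [ind]

lemma F16_mem (t : ℝ) : F16 t ∈ Dom (show (0:ℕ) < 4 by norm_num)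
    ({⟨(3, 0), by decide⟩} : Set (Pair 4))
    ({⟨(1, 0), by decide⟩, ⟨(2, 0), by decide⟩} : Set (Pair 4)) := by
  refine ⟨rfl, fun p hp => ?_, fun p hp => ?_⟩
  · simp only [Set.mem_singleton_iff] at hp
    simp [F16, ind, hp]
  · simp only [Set.mem_insert_iff, Set.mem_singleton_iff, not_or] at hp
    simp [F16, ind, hp.1, hp.2]

lemma mem_ker_iff (x : Dom (show (0:ℕ) < 4 by norm_num)
    ({⟨(3, 0), by decide⟩} : Set (Pair 4))
    ({⟨(1, 0), by decide⟩, ⟨(2, 0), by decide⟩} : Set (Pair 4))) :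
    Tmap (show (0:ℕ) < 4 by norm_num)
      ({⟨(3, 0), by decide⟩} : Set (Pair 4))
      ({⟨(1, 0), by decide⟩, ⟨(2, 0), by decide⟩} : Set (Pair 4)) x = 0 ↔
    ∃ t : ℝ, (x : (Fin 4 → ℝ) × (Pair 4 → ℝ) × (Pair 4 → ℝ)) = F16 t := by
  obtain ⟨⟨d, e, f⟩, hd0, he, hf⟩ := x
  simp only [Submodule.coe_mk]
  constructor
  · intro hx
    have hq : ∀ p : Pair 4, (d p.1.1 - d p.1.2) + e p - f p = 0 := by
      intro p
      have := congrFun hx p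
      simpa [Tmap, Lfull] using this
    refine ⟨d 1, ?_⟩
    have e21 : e ⟨(2,1), by decide⟩ = 0 := he _ (by decide)
    have e31 : e ⟨(3,1), by decide⟩ = 0 := he _ (by decide)
    have e32 : e ⟨(3,2), by decide⟩ = 0 := he _ (by decide)
    have e10 : e ⟨(1,0), by decide⟩ = 0 := he _ (by decide)
    have e20 : e ⟨(2,0), by decide⟩ = 0 := he _ (by decide)
    have f21 : f ⟨(2,1), by decide⟩ = 0 := hf _ (by decide)
    have f31 : f ⟨(3,1), by decide⟩ = 0 := hf _ (by decide)
    have f32 : f ⟨(3,2), by decide⟩ = 0 := hf _ (by decide)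
    have f30 : f ⟨(3,0), by decide⟩ = 0 := hf _ (by decide)
    have q21 := hq ⟨(2,1), by decide⟩
    have q31 := hq ⟨(3,1), by decide⟩
    have q10 := hq ⟨(1,0), by decide⟩
    have q20 := hq ⟨(2,0), by decide⟩
    have q30 := hq ⟨(3,0), by decide⟩
    simp only [e21, e31, e10, e20, f21, f31, f30] at q21 q31 q10 q20 q30
    have h0 : d 0 = 0 := hd0
    have hd2 : d 2 = d 1 := by linarith
    have hd3 : d 3 = d 1 := by linarith
    refine Prod.ext ?_ (Prod.ext ?_ ?_)
    · funext i
      fin_cases i <;> simp [F16]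
      · exact h0
      · exact hd2
      · exact hd3
    · funext p
      fin_cases p <;> simp [F16, ind]
      · exact e10
      · exact e20
      · exact e21
      · linarith
      · exact e31
      · exact e32
    · funext p
      fin_cases p <;> simp [F16, ind]
      · linarith
      · linarith
      · exact f21
      · exact f30
      · exact f31
      · exact f32
  · rintro ⟨t, hx⟩
    obtain ⟨hd, he', hf'⟩ : d = (F16 t).1 ∧ e = (F16 t).2.1 ∧ f = (F16 t).2.2 := by
      refine ⟨congrArg Prod.fst hx, ?_, ?_⟩
      · exact congrArg (fun y => y.2.1) hx
      · exact congrArg (fun y => y.2.2) hx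
    subst hd he' hf'
    funext p
    simp only [Tmap, Lfull, LinearMap.comp_apply, Submodule.coe_subtype, LinearMap.coe_mk,
      AddHom.coe_mk, Pi.zero_apply]
    fin_cases p <;> simp [F16, ind]

theorem stmt_16 :
    Module.finrank ℝ
      (LinearMap.ker (Tmap (show (0:ℕ) < 4 by norm_num)
        ({⟨(3, 0), by decide⟩} : Set (Pair 4))
        ({⟨(1, 0), by decide⟩, ⟨(2, 0), by decide⟩} : Set (Pair 4)))) = 1 ∧
    ∀ x : Dom (show (0:ℕ) < 4 by norm_num)
        ({⟨(3, 0), by decide⟩} : Set (Pair 4))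
        ({⟨(1, 0), by decide⟩, ⟨(2, 0), by decide⟩} : Set (Pair 4)),
      x ∈ LinearMap.ker (Tmap (show (0:ℕ) < 4 by norm_num)
        ({⟨(3, 0), by decide⟩} : Set (Pair 4))
        ({⟨(1, 0), by decide⟩, ⟨(2, 0), by decide⟩} : Set (Pair 4))) ↔
      ∃ t : ℝ, (x : (Fin 4 → ℝ) × (Pair 4 → ℝ) × (Pair 4 → ℝ)) =
        ((fun i => if i = 0 then 0 else t),
          (-t) • ind (⟨(3, 0), by decide⟩ : Pair 4),
          t • ind (⟨(1, 0), by decide⟩ : Pair 4)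
            + t • ind (⟨(2, 0), by decide⟩ : Pair 4)) := by
  constructor
  · set v : Dom (show (0:ℕ) < 4 by norm_num)
        ({⟨(3, 0), by decide⟩} : Set (Pair 4))
        ({⟨(1, 0), by decide⟩, ⟨(2, 0), by decide⟩} : Set (Pair 4)) :=
      ⟨F16 1, F16_mem 1⟩ with hv_def
    have hv : v ≠ 0 := by
      intro h
      have h1 := congrArg Subtype.val h
      rw [hv_def] at h1
      have h2 := congrFun (congrArg Prod.fst h1) 1
      simp [F16] at h2
    have hspan : LinearMap.ker (Tmap (show (0:ℕ) < 4 by norm_num)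
        ({⟨(3, 0), by decide⟩} : Set (Pair 4))
        ({⟨(1, 0), by decide⟩, ⟨(2, 0), by decide⟩} : Set (Pair 4)))
        = Submodule.span ℝ {v} := by
      ext x
      rw [LinearMap.mem_ker, mem_ker_iff x, Submodule.mem_span_singleton]
      constructor
      · rintro ⟨t, ht⟩
        refine ⟨t, Subtype.ext ?_⟩
        show t • F16 1 = _
        rw [F16_smul]
        exact ht.symm
      · rintro ⟨t, rfl⟩
        refine ⟨t, ?_⟩
        show t • F16 1 = F16 t
        exact F16_smul t
    rw [hspan, finrank_span_singleton hv]
  · intro x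
    rw [LinearMap.mem_ker]
    exact mem_ker_iff x
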